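/- Let G be the join of a complete graph on t vertices with an independent set of size m, where m ≥ t + 2. Then G contains a path on 2t + 1 vertices, but G contains no path on 2t + 2 vertices. -/

import Mathlib

open SimpleGraph

/-- `H` is contained in `G` as a subgraph: there is an injective map preserving adjacency. -/
def Contains {α β : Type*} (G : SimpleGraph α) (H : SimpleGraph β) : Prop :=
  ∃ f : β ↪ α, ∀ a b, H.Adj a b → G.Adj (f a) (f b)

/-- The join of two graphs: all cross edges are added. -/
def graphJoin {α β : Type*} (G : SimpleGraph α) (H : SimpleGraph β) : SimpleGraph (α ⊕ β) where
  Adj x y :=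
    match x, y with
    | Sum.inl a, Sum.inl b => G.Adj a b
    | Sum.inl _, Sum.inr _ => True
    | Sum.inr _, Sum.inl _ => True
    | Sum.inr a, Sum.inr b => H.Adj a b
  symm := by
    constructor
    rintro (a|a) (b|b) h
    · exact G.adj_symm h
    · trivial
    · trivial
    · exact H.adj_symm h
  loopless := by
    constructor
    rintro (a|a) h
    · exact G.irrefl h
    · exact H.irrefl h

/-- The join of a clique on `t` vertices with an independent set of `m` vertices. -/
def cliqueIndepJoin (t m : ℕ) : SimpleGraph (Fin t ⊕ Fin m) :=
  graphJoin (completeGraph (Fin t)) (⊥ : SimpleGraph (Fin m))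

/-- the join of a clique on `t` vertices with an independent set of size
`m ≥ t + 2` contains a path on `2t+1` vertices but no path on `2t+2` vertices. -/
theorem stmt_0 (t m : ℕ) (hm : t + 2 ≤ m) :
    Contains (cliqueIndepJoin t m) (SimpleGraph.pathGraph (2 * t + 1)) ∧
    ¬ Contains (cliqueIndepJoin t m) (SimpleGraph.pathGraph (2 * t + 2)) := by
  constructor
  · -- positive part: alternate independent / clique vertices
    have hfn : ∀ i : Fin (2 * t + 1), i.val % 2 = 0 → i.val / 2 < m := by
      intro i h; have := i.isLt; omega
    have hfo : ∀ i : Fin (2 * t + 1), i.val % 2 ≠ 0 → i.val / 2 < t := by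
      intro i h; have := i.isLt; omega
    classical
    let f : Fin (2 * t + 1) → Fin t ⊕ Fin m := fun i =>
      if h : i.val % 2 = 0 then Sum.inr ⟨i.val / 2, hfn i h⟩
      else Sum.inl ⟨i.val / 2, hfo i h⟩
    have hinj : Function.Injective f := by
      intro i j hij
      simp only [f] at hij
      by_cases hi : i.val % 2 = 0 <;> by_cases hj : j.val % 2 = 0 <;>
        simp [hi, hj] at hij <;> [skip; skip] <;>
        · exact Fin.ext (by omega)
    refine ⟨⟨f, hinj⟩, ?_⟩
    intro a b hab
    rw [pathGraph_adj] at hab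
    simp only [Function.Embedding.coeFn_mk, f]
    have key : ∀ x y : Fin (2 * t + 1), x.val + 1 = y.val →
        (cliqueIndepJoin t m).Adj
          (if h : x.val % 2 = 0 then Sum.inr ⟨x.val / 2, hfn x h⟩
            else Sum.inl ⟨x.val / 2, hfo x h⟩)
          (if h : y.val % 2 = 0 then Sum.inr ⟨y.val / 2, hfn y h⟩
            else Sum.inl ⟨y.val / 2, hfo y h⟩) := by
      intro x y hxy
      by_cases hx : x.val % 2 = 0
      · have hy : ¬ y.val % 2 = 0 := by omega
        simp [hx, hy, cliqueIndepJoin, graphJoin]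
      · have hy : y.val % 2 = 0 := by omega
        simp [hx, hy, cliqueIndepJoin, graphJoin]
    rcases hab with h | h
    · exact key a b h
    · exact ((cliqueIndepJoin t m).adj_symm (key b a h))
  · -- negative part
    rintro ⟨f, hf⟩
    have claim : ∀ k : Fin (t + 1), ∃ (j : Fin (2 * t + 2)) (a : Fin t),
        (j.val = 2 * k.val ∨ j.val = 2 * k.val + 1) ∧ f j = Sum.inl a := by
      intro k
      have hk := k.isLt
      let j1 : Fin (2 * t + 2) := ⟨2 * k.val, by omega⟩
      let j2 : Fin (2 * t + 2) := ⟨2 * k.val + 1, by omega⟩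
      have hadj : (SimpleGraph.pathGraph (2 * t + 2)).Adj j1 j2 := by
        rw [pathGraph_adj]; left; rfl
      have h := hf j1 j2 hadj
      cases h1 : f j1 with
      | inl a => exact ⟨j1, a, Or.inl rfl, h1⟩
      | inr b =>
        cases h2 : f j2 with
        | inl a => exact ⟨j2, a, Or.inr rfl, h2⟩
        | inr b' =>
          rw [h1, h2] at h
          exact absurd h (by simp [cliqueIndepJoin, graphJoin])
    choose j a hj ha using claim
    have hainj : Function.Injective a := by
      intro k k' hkk'
      have : f (j k) = f (j k') := by rw [ha k, ha k', hkk']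
      have hjj : j k = j k' := f.injective this
      have h1 := hj k
      have h2 := hj k'
      rw [hjj] at h1
      exact Fin.ext (by omega)
    have := Fintype.card_le_of_injective a hainj
    simp at this
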